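/- Let D₁ = D(x₁, r₁) and D̆₂ = {(x, −r) : (x, r) ∈ D(x₂, r₂)} be a trimmed downward half-cone and the reflection (through r = 0) of another, with 0 < r₁, r₂ < L, apexes at heights r₁ and −r₂. Then the balls B(x₁, r₁) and B(x₂, r₂) in ℝ³ intersect if and only if D₁ and D̆₂ intersect in ℝ⁴. -/

import Mathlib

open Metric Set

theorem cones_intersect_iff_balls_intersect
    (x₁ x₂ : EuclideanSpace ℝ (Fin 3)) (r₁ r₂ L : ℝ)
    (h₁ : 0 < r₁) (h₁L : r₁ < L) (h₂ : 0 < r₂) (h₂L : r₂ < L) :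
    (closedBall x₁ r₁ ∩ closedBall x₂ r₂).Nonempty ↔
      ({p : EuclideanSpace ℝ (Fin 3) × ℝ |
          ‖p.1 - x₁‖ ≤ |p.2 - r₁| ∧ r₁ - L ≤ p.2 ∧ p.2 ≤ r₁} ∩
       {p : EuclideanSpace ℝ (Fin 3) × ℝ |
          ‖p.1 - x₂‖ ≤ |(-p.2) - r₂| ∧ r₂ - L ≤ -p.2 ∧ -p.2 ≤ r₂}).Nonempty := by
  constructor
  · rintro ⟨x, hx1, hx2⟩
    refine ⟨(x, 0), ⟨?_, ?_, h₁.le⟩, ⟨?_, ?_, by simpa using h₂.le⟩⟩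
    · rw [show ((x,(0:ℝ)).2 - r₁) = -r₁ by simp, abs_neg, abs_of_pos h₁]
      simpa [dist_eq_norm] using hx1
    · simp; linarith
    · rw [show (-(x,(0:ℝ)).2 - r₂) = -r₂ by simp, abs_neg, abs_of_pos h₂]
      simpa [dist_eq_norm] using hx2
    · simp; linarith
  · rintro ⟨⟨x, t⟩, ⟨hc1, _, ht1⟩, ⟨hc2, _, ht2⟩⟩
    simp only at hc1 hc2 ht1 ht2
    have ht2' : -r₂ ≤ t := by linarith
    rw [abs_of_nonpos (by linarith)] at hc1
    rw [abs_of_nonpos (by linarith)] at hc2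
    have hd : dist x₁ x₂ ≤ r₁ + r₂ := by
      calc dist x₁ x₂ ≤ dist x₁ x + dist x x₂ := dist_triangle _ _ _
        _ ≤ (r₁ - t) + (t + r₂) := by
            rw [dist_comm x₁ x, dist_eq_norm, dist_eq_norm]
            exact add_le_add (by linarith) (by linarith)
        _ = r₁ + r₂ := by ring
    set θ : ℝ := r₁ / (r₁ + r₂) with hθ
    have hsum : 0 < r₁ + r₂ := by linarith
    have hθ0 : 0 ≤ θ := by positivity
    have hθ1 : θ ≤ 1 := by rw [hθ, div_le_one hsum]; linarith
    refine ⟨x₁ + θ • (x₂ - x₁), ?_, ?_⟩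
    · rw [mem_closedBall, dist_eq_norm]
      have : x₁ + θ • (x₂ - x₁) - x₁ = θ • (x₂ - x₁) := by abel
      rw [this, norm_smul, Real.norm_eq_abs, abs_of_nonneg hθ0]
      have : ‖x₂ - x₁‖ = dist x₁ x₂ := by rw [dist_eq_norm, norm_sub_rev]
      rw [this, hθ, div_mul_eq_mul_div, div_le_iff₀ hsum]
      nlinarith [dist_nonneg (x := x₁) (y := x₂)]
    · rw [mem_closedBall, dist_eq_norm]
      have : x₁ + θ • (x₂ - x₁) - x₂ = (θ - 1) • (x₂ - x₁) := by
        rw [sub_smul, one_smul]; abel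
      rw [this, norm_smul, Real.norm_eq_abs, abs_of_nonpos (by linarith)]
      have h2 : ‖x₂ - x₁‖ = dist x₁ x₂ := by rw [dist_eq_norm, norm_sub_rev]
      rw [h2]
      have hθ' : -(θ - 1) = r₂ / (r₁ + r₂) := by
        rw [hθ]; field_simp; ring
      rw [hθ', div_mul_eq_mul_div, div_le_iff₀ hsum]
      nlinarith [dist_nonneg (x := x₁) (y := x₂)]
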